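/- Let n ≥ 1 and let Q be a real normal defining function of dimension n that is finitely nondegenerate at 0. Then for every neighborhood U of 0 in ℂ^n there exist points a₁, …, a_n ∈ U such that the n vectors ∂_z Q̄(a_j, 0, 0) ∈ ℂ^n (the gradient of Q̄(χ,z,τ) with respect to its second group of n variables, evaluated at (a_j,0,0)), j = 1, …, n, are linearly independent over ℂ. Equivalently, for every neighborhood U of 0 in ℂ^n there exist b₁, …, b_n ∈ U such that the gradient vectors ∂_χ Q(b_j, 0, 0) ∈ ℂ^n, j = 1, …, n, are linearly independent over ℂ. -/

import Mathlib

open Filter Topology Complex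

namespace HSPMpaper

variable {n : ℕ}

/-- Partial derivative of `F` in the `i`-th coordinate direction. -/
noncomputable def pd (i : Fin n) (F : (Fin n → ℂ) → ℂ) : (Fin n → ℂ) → ℂ :=
  fun z => fderiv ℂ F z (Pi.single i 1)

/-- Iterated partial derivative `∂^α` for a multi-index `α`. -/
noncomputable def mpd (α : Fin n → ℕ) (F : (Fin n → ℂ) → ℂ) : (Fin n → ℂ) → ℂ :=
  ((List.ofFn fun i : Fin n => (pd i)^[α i]).foldr (· ∘ ·) id) F

/-- Componentwise complex conjugation on `ℂⁿ`. -/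
def conjV (z : Fin n → ℂ) : Fin n → ℂ := fun i => starRingEnd ℂ (z i)

/-- The conjugate defining function `Q̄(χ,z,τ) = conj (Q (conj χ) (conj z) (conj τ))`. -/
def QBar (Q : (Fin n → ℂ) → (Fin n → ℂ) → ℂ → ℂ) : (Fin n → ℂ) → (Fin n → ℂ) → ℂ → ℂ :=
  fun χ z τ => starRingEnd ℂ (Q (conjV χ) (conjV z) (starRingEnd ℂ τ))

/-- `Q` is a normal defining function (of dimension `n`): holomorphic near the origin of
`ℂⁿ × ℂⁿ × ℂ` and satisfying `Q(0,χ,τ) = τ` and `Q(z,0,τ) = τ` near `0`. -/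
def IsNormalDF (Q : (Fin n → ℂ) → (Fin n → ℂ) → ℂ → ℂ) : Prop :=
  (∀ᶠ p in 𝓝 (0 : (Fin n → ℂ) × (Fin n → ℂ) × ℂ),
      AnalyticAt ℂ (fun q : (Fin n → ℂ) × (Fin n → ℂ) × ℂ => Q q.1 q.2.1 q.2.2) p) ∧
  (∀ᶠ p in 𝓝 (0 : (Fin n → ℂ) × (Fin n → ℂ) × ℂ),
      Q 0 p.2.1 p.2.2 = p.2.2 ∧ Q p.1 0 p.2.2 = p.2.2)

/-- `Q` is a real normal defining function: normal and `Q(z,χ,Q̄(χ,z,w)) = w` near `0`. -/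
def IsRealNormalDF (Q : (Fin n → ℂ) → (Fin n → ℂ) → ℂ → ℂ) : Prop :=
  IsNormalDF Q ∧
  ∀ᶠ p in 𝓝 (0 : (Fin n → ℂ) × (Fin n → ℂ) × ℂ),
    Q p.1 p.2.1 (QBar Q p.2.1 p.1 p.2.2) = p.2.2

/-- `(f,g,f̃,g̃)` is a holomorphic Segre preserving map sending `(ℳ,0)` into `(ℳ',0)`. -/
def IsHSPM (Q Q' : (Fin n → ℂ) → (Fin n → ℂ) → ℂ → ℂ)
    (f : (Fin n → ℂ) → ℂ → Fin n → ℂ) (g : (Fin n → ℂ) → ℂ → ℂ)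
    (ft : (Fin n → ℂ) → ℂ → Fin n → ℂ) (gt : (Fin n → ℂ) → ℂ → ℂ) : Prop :=
  (∀ᶠ p in 𝓝 (0 : (Fin n → ℂ) × ℂ), AnalyticAt ℂ (fun q : (Fin n → ℂ) × ℂ => f q.1 q.2) p) ∧
  (∀ᶠ p in 𝓝 (0 : (Fin n → ℂ) × ℂ), AnalyticAt ℂ (fun q : (Fin n → ℂ) × ℂ => g q.1 q.2) p) ∧
  (∀ᶠ p in 𝓝 (0 : (Fin n → ℂ) × ℂ), AnalyticAt ℂ (fun q : (Fin n → ℂ) × ℂ => ft q.1 q.2) p) ∧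
  (∀ᶠ p in 𝓝 (0 : (Fin n → ℂ) × ℂ), AnalyticAt ℂ (fun q : (Fin n → ℂ) × ℂ => gt q.1 q.2) p) ∧
  f 0 0 = 0 ∧ g 0 0 = 0 ∧ ft 0 0 = 0 ∧ gt 0 0 = 0 ∧
  ∀ᶠ p in 𝓝 (0 : (Fin n → ℂ) × (Fin n → ℂ) × ℂ),
    g p.1 (Q p.1 p.2.1 p.2.2) =
      Q' (f p.1 (Q p.1 p.2.1 p.2.2)) (ft p.2.1 p.2.2) (gt p.2.1 p.2.2)

/-- `M` is of finite type at `0`: `(z,χ) ↦ Q(z,χ,0)` does not vanish identically near `0`. -/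
def FiniteType (Q : (Fin n → ℂ) → (Fin n → ℂ) → ℂ → ℂ) : Prop :=
  ¬ ∀ᶠ p in 𝓝 (0 : (Fin n → ℂ) × (Fin n → ℂ)), Q p.1 p.2 0 = 0

/-- Jacobian matrix of `z ↦ f(z,0)` at `z`. -/
noncomputable def jacz (f : (Fin n → ℂ) → ℂ → Fin n → ℂ) (z : Fin n → ℂ) :
    Matrix (Fin n) (Fin n) ℂ :=
  Matrix.of fun i j => pd j (fun z' => f z' 0 i) z

/-- `ℋ` is Segre transversal to `ℳ'` at `0`: `∂g/∂w(0,0) ≠ 0`. -/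
noncomputable def SegreTransversal (g : (Fin n → ℂ) → ℂ → ℂ) : Prop :=
  deriv (fun w => g 0 w) 0 ≠ 0

/-- `ℋ` is totally Segre nondegenerate at `0`. -/
def TotallySegreNondeg (f ft : (Fin n → ℂ) → ℂ → Fin n → ℂ) : Prop :=
  (¬ ∀ᶠ z in 𝓝 (0 : Fin n → ℂ), (jacz f z).det = 0) ∧
  (¬ ∀ᶠ χ in 𝓝 (0 : Fin n → ℂ), (jacz ft χ).det = 0)

/-- `ℋ` is transversally null: `g ≡ 0` and `g̃ ≡ 0` near `0`. -/
def TransversallyNull (g gt : (Fin n → ℂ) → ℂ → ℂ) : Prop :=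
  (∀ᶠ p in 𝓝 (0 : (Fin n → ℂ) × ℂ), g p.1 p.2 = 0) ∧
  (∀ᶠ p in 𝓝 (0 : (Fin n → ℂ) × ℂ), gt p.1 p.2 = 0)

/-- The `k`-th coordinate direction in `ℂⁿ × ℂ`. -/
noncomputable def dirCT (n : ℕ) (k : Fin (n + 1)) : (Fin n → ℂ) × ℂ :=
  if h : (k : ℕ) < n then (Pi.single ⟨k, h⟩ 1, 0) else (0, 1)

/-- `M` is holomorphically nondegenerate at `0`: for some `K`, the map
`(χ,τ) ↦ (∂_z^α Q(0,χ,τ))_{|α| ≤ K}` has generic rank `n+1`. -/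
def HolNondeg (Q : (Fin n → ℂ) → (Fin n → ℂ) → ℂ → ℂ) : Prop :=
  ∃ K : ℕ, ∃ A : Fin (n + 1) → Fin n → ℕ, (∀ j, (∑ i, A j i) ≤ K) ∧
    ¬ ∀ᶠ p in 𝓝 (0 : (Fin n → ℂ) × ℂ),
      (Matrix.of fun j k : Fin (n + 1) =>
        fderiv ℂ (fun q : (Fin n → ℂ) × ℂ => mpd (A j) (fun z => Q z q.1 q.2) 0) p
          (dirCT n k)).det = 0

/-- `M` is of class `𝒞` at `0`: for some `K`, the map
`χ ↦ (∂_z^α Q(0,χ,0))_{|α| ≤ K}` has generic rank `n`. -/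
def ClassC (Q : (Fin n → ℂ) → (Fin n → ℂ) → ℂ → ℂ) : Prop :=
  ∃ K : ℕ, ∃ A : Fin n → Fin n → ℕ, (∀ j, (∑ i, A j i) ≤ K) ∧
    ¬ ∀ᶠ χ in 𝓝 (0 : Fin n → ℂ),
      (Matrix.of fun j k : Fin n =>
        pd k (fun χ' => mpd (A j) (fun z => Q z χ' 0) 0) χ).det = 0

/-- `M` is finitely nondegenerate at `0`: for some `K`, the vectors
`∂_χ ∂_z^α Q(0,0,0)`, `|α| ≤ K`, span `ℂⁿ`. -/
def FinNondeg (Q : (Fin n → ℂ) → (Fin n → ℂ) → ℂ → ℂ) : Prop :=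
  ∃ K : ℕ, Submodule.span ℂ
    {v : Fin n → ℂ | ∃ α : Fin n → ℕ, (∑ i, α i) ≤ K ∧
      v = fun i => pd i (fun χ => mpd α (fun z => Q z χ 0) 0) 0} = ⊤

/-- Full Jacobian matrix of `(z,w) ↦ (f(z,w), g(z,w))` at `p ∈ ℂⁿ × ℂ`. -/
noncomputable def jacFull (f : (Fin n → ℂ) → ℂ → Fin n → ℂ) (g : (Fin n → ℂ) → ℂ → ℂ)
    (p : (Fin n → ℂ) × ℂ) : Matrix (Fin (n + 1)) (Fin (n + 1)) ℂ :=
  Matrix.of fun i k =>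
    fderiv ℂ (fun q : (Fin n → ℂ) × ℂ => (Fin.snoc (f q.1 q.2) (g q.1 q.2) : Fin (n + 1) → ℂ) i) p (dirCT n k)

/-- The degree-`d` homogeneous term of the Taylor series of `φ` at `0`. -/
noncomputable def homogTerm (d : ℕ) (φ : (Fin n → ℂ) → ℂ) : (Fin n → ℂ) → ℂ :=
  fun z => iteratedFDeriv ℂ d φ 0 (fun _ => z) / (d.factorial : ℂ)

/-- The order of vanishing of `φ` at `0`. -/
noncomputable def vanishOrder (φ : (Fin n → ℂ) → ℂ) : ℕ :=
  sInf {d | homogTerm d φ ≠ 0}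



/-! ### Auxiliary machinery for statement 9 -/

section DirectionalDerivatives

variable {D : Type*} [NormedAddCommGroup D] [NormedSpace ℂ D]
variable {D₁ : Type*} [NormedAddCommGroup D₁] [NormedSpace ℂ D₁]
variable {D₂ : Type*} [NormedAddCommGroup D₂] [NormedSpace ℂ D₂]

/-- Directional partial derivative. -/
noncomputable def dd (u : D) (P : D → ℂ) : D → ℂ := fun x => fderiv ℂ P x u

/-- Iterated directional partial derivatives along a list of directions. -/
noncomputable def ddC : List D → (D → ℂ) → D → ℂ
  | [], P => P
  | u :: L, P => dd u (ddC L P)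

lemma dd_congr {S : Set D} (hS : IsOpen S) {f g : D → ℂ} (h : ∀ x ∈ S, f x = g x) (u : D) :
    ∀ x ∈ S, dd u f x = dd u g x := by
  intro x hx
  have hfg : f =ᶠ[𝓝 x] g := Filter.eventuallyEq_of_mem (hS.mem_nhds hx) h
  show fderiv ℂ f x u = fderiv ℂ g x u
  rw [hfg.fderiv_eq]

lemma ddC_congr {S : Set D} (hS : IsOpen S) {f g : D → ℂ} (h : ∀ x ∈ S, f x = g x)
    (L : List D) : ∀ x ∈ S, ddC L f x = ddC L g x := by
  induction L with
  | nil => exact h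
  | cons u L ih => exact dd_congr hS ih u

lemma dd_analyticOnNhd {S : Set D} {P : D → ℂ} (h : AnalyticOnNhd ℂ P S) (u : D) :
    AnalyticOnNhd ℂ (dd u P) S := by
  intro x hx
  have h1 : AnalyticAt ℂ (fderiv ℂ P) x := h.fderiv x hx
  have h2 : AnalyticAt ℂ (fun y => ContinuousLinearMap.apply ℂ ℂ u (fderiv ℂ P y)) x :=
    ((ContinuousLinearMap.apply ℂ ℂ u).analyticAt _).comp h1
  have h3 : (fun y => ContinuousLinearMap.apply ℂ ℂ u (fderiv ℂ P y)) = dd u P := by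
    funext y; simp [dd]
  exact h3 ▸ h2

lemma ddC_analyticOnNhd {S : Set D} {P : D → ℂ} (h : AnalyticOnNhd ℂ P S) (L : List D) :
    AnalyticOnNhd ℂ (ddC L P) S := by
  induction L with
  | nil => exact h
  | cons u L ih => exact dd_analyticOnNhd ih u

lemma dd_comm {S : Set D} (hS : IsOpen S) {P : D → ℂ} (h : AnalyticOnNhd ℂ P S) (u v : D) :
    ∀ x ∈ S, dd u (dd v P) x = dd v (dd u P) x := by
  intro x hx
  have hd : AnalyticOnNhd ℂ (fderiv ℂ P) S := h.fderiv
  have key : ∀ w : D, fderiv ℂ (dd w P) x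
      = (ContinuousLinearMap.apply ℂ ℂ w).comp (fderiv ℂ (fderiv ℂ P) x) := by
    intro w
    have hcomp := ((ContinuousLinearMap.apply ℂ ℂ w).hasFDerivAt.comp x
      (hd x hx).differentiableAt.hasFDerivAt)
    have h3 : (fun y => ContinuousLinearMap.apply ℂ ℂ w (fderiv ℂ P y)) = dd w P := by
      funext y; simp [dd]
    rw [← h3]
    exact hcomp.fderiv
  have hsymm : IsSymmSndFDerivAt ℂ P x :=
    ((h x hx).contDiffAt (n := 2)).isSymmSndFDerivAt (by simp)
  show fderiv ℂ (dd v P) x u = fderiv ℂ (dd u P) x v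
  rw [key v, key u]
  simp only [ContinuousLinearMap.comp_apply, ContinuousLinearMap.apply_apply]
  exact hsymm u v

lemma ddC_comm {S : Set D} (hS : IsOpen S) {P : D → ℂ} (h : AnalyticOnNhd ℂ P S) (u : D)
    (L : List D) : ∀ x ∈ S, dd u (ddC L P) x = ddC L (dd u P) x := by
  induction L with
  | nil => intro x _; rfl
  | cons v L ih =>
    intro x hx
    have h1 := dd_comm hS (ddC_analyticOnNhd h L) u v x hx
    have h2 := dd_congr hS ih v x hx
    exact h1.trans h2

lemma ddC_append (L₁ L₂ : List D) (P : D → ℂ) : ddC (L₁ ++ L₂) P = ddC L₁ (ddC L₂ P) := by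
  induction L₁ with
  | nil => rfl
  | cons u L ih =>
    show dd u (ddC (L ++ L₂) P) = dd u (ddC L (ddC L₂ P))
    rw [ih]

lemma ddC_replicate (m : ℕ) (u : D) (P : D → ℂ) :
    ddC (List.replicate m u) P = (dd u)^[m] P := by
  induction m with
  | zero => rfl
  | succ m ih =>
    rw [List.replicate_succ]
    show dd u (ddC (List.replicate m u) P) = _
    rw [ih, Function.iterate_succ_apply']

lemma dd_fst {P : D₁ × D₂ → ℂ} {z : D₁} {χ : D₂} (h : DifferentiableAt ℂ P (z, χ)) (u : D₁) :
    dd u (fun z' => P (z', χ)) z = dd (u, (0 : D₂)) P (z, χ) := by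
  have h2 : HasFDerivAt (fun z' => P (z', χ))
      ((fderiv ℂ P (z, χ)).comp ((ContinuousLinearMap.id ℂ D₁).prod 0)) z :=
    h.hasFDerivAt.comp z (HasFDerivAt.prodMk (hasFDerivAt_id z) (hasFDerivAt_const χ z))
  show fderiv ℂ (fun z' => P (z', χ)) z u = fderiv ℂ P (z, χ) (u, 0)
  rw [h2.fderiv]
  simp

lemma dd_snd {P : D₁ × D₂ → ℂ} {z : D₁} {χ : D₂} (h : DifferentiableAt ℂ P (z, χ)) (u : D₂) :
    dd u (fun χ' => P (z, χ')) χ = dd ((0 : D₁), u) P (z, χ) := by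
  have h2 : HasFDerivAt (fun χ' => P (z, χ'))
      ((fderiv ℂ P (z, χ)).comp ((0 : D₂ →L[ℂ] D₁).prod (ContinuousLinearMap.id ℂ D₂))) χ :=
    h.hasFDerivAt.comp χ (HasFDerivAt.prodMk (hasFDerivAt_const z χ) (hasFDerivAt_id χ))
  show fderiv ℂ (fun χ' => P (z, χ')) χ u = fderiv ℂ P (z, χ) (0, u)
  rw [h2.fderiv]
  simp

lemma ddC_fst {T : Set (D₁ × D₂)} (hT : IsOpen T) {P : D₁ × D₂ → ℂ}
    (hP : AnalyticOnNhd ℂ P T) (L : List D₁) :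
    ∀ x ∈ T, ddC L (fun z' => P (z', x.2)) x.1 = ddC (L.map fun u => (u, (0 : D₂))) P x := by
  induction L with
  | nil => intro x _; rfl
  | cons u L ih =>
    intro x hx
    have hopen : IsOpen {z' : D₁ | (z', x.2) ∈ T} :=
      hT.preimage (continuous_id.prodMk continuous_const)
    have hmem : x.1 ∈ {z' : D₁ | (z', x.2) ∈ T} := by
      show (x.1, x.2) ∈ T; exact hx
    have heq : ∀ z' ∈ {z' : D₁ | (z', x.2) ∈ T},
        ddC L (fun z'' => P (z'', x.2)) z'
          = (fun z' => ddC (L.map fun u => (u, (0 : D₂))) P (z', x.2)) z' :=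
      fun z' hz' => ih (z', x.2) hz'
    calc ddC (u :: L) (fun z'' => P (z'', x.2)) x.1
        = dd u (ddC L (fun z'' => P (z'', x.2))) x.1 := rfl
      _ = dd u (fun z' => ddC (L.map fun u => (u, (0 : D₂))) P (z', x.2)) x.1 :=
          dd_congr hopen heq u x.1 hmem
      _ = dd (u, (0 : D₂)) (ddC (L.map fun u => (u, (0 : D₂))) P) (x.1, x.2) :=
          dd_fst ((ddC_analyticOnNhd hP _ x hx).differentiableAt) u
      _ = ddC ((u :: L).map fun u => (u, (0 : D₂))) P x := rfl

end DirectionalDerivatives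

lemma pd_eq_dd (i : Fin n) : pd i = dd (Pi.single i 1) := rfl

lemma foldr_eq_ddC (α : Fin n → ℕ) (l : List (Fin n)) (f : (Fin n → ℂ) → ℂ) :
    ((l.map fun i => (pd i)^[α i]).foldr (· ∘ ·) id) f
      = ddC (l.flatMap fun i => List.replicate (α i) (Pi.single i 1)) f := by
  induction l with
  | nil => rfl
  | cons k l ih =>
    simp only [List.map_cons, List.foldr_cons, Function.comp_apply, List.flatMap_cons,
      ddC_append, ddC_replicate, ih]
    rfl

lemma mpd_eq_ddC (α : Fin n → ℕ) (f : (Fin n → ℂ) → ℂ) :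
    mpd α f = ddC ((List.finRange n).flatMap fun i => List.replicate (α i) (Pi.single i 1)) f := by
  rw [mpd, List.ofFn_eq_map]
  exact foldr_eq_ddC α _ f

lemma mem_of_dd {V' : Set (Fin n → ℂ)} (hV : IsOpen V') {W : Submodule ℂ (Fin n → ℂ)}
    {G : (Fin n → ℂ) → Fin n → ℂ}
    (hGa : ∀ i, AnalyticOnNhd ℂ (fun y => G y i) V')
    (hGW : ∀ y ∈ V', G y ∈ W) (u : Fin n → ℂ) :
    ∀ x ∈ V', (fun i => dd u (fun y => G y i) x) ∈ W := by
  intro x hx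
  obtain ⟨W', hWc⟩ := Submodule.exists_isCompl W
  set π : (Fin n → ℂ) →ₗ[ℂ] W' := W'.projectionOnto W hWc.symm with hπ
  have hker : ∀ v, π v = 0 ↔ v ∈ W := by
    intro v
    rw [← LinearMap.mem_ker, hπ, Submodule.linearProjOfIsCompl_ker]
  set πc : (Fin n → ℂ) →L[ℂ] W' := LinearMap.toContinuousLinearMap π with hπc
  have hπceq : ∀ v, πc v = π v := by
    intro v; rw [hπc, LinearMap.coe_toContinuousLinearMap']
  have hGd : DifferentiableAt ℂ G x :=
    differentiableAt_pi.2 fun i => ((hGa i) x hx).differentiableAt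
  have h0 : HasFDerivAt (fun y => πc (G y)) (πc.comp (fderiv ℂ G x)) x :=
    πc.hasFDerivAt.comp x hGd.hasFDerivAt
  have hzero : (fun y => πc (G y)) =ᶠ[𝓝 x] fun _ => (0 : W') :=
    Filter.eventuallyEq_of_mem (hV.mem_nhds hx)
      (fun y hy => by rw [hπceq]; exact (hker (G y)).2 (hGW y hy))
  have h0' : HasFDerivAt (fun y => πc (G y)) (0 : (Fin n → ℂ) →L[ℂ] W') x :=
    (hasFDerivAt_const (0 : W') x).congr_of_eventuallyEq hzero
  have hcz : πc.comp (fderiv ℂ G x) = 0 := h0.unique h0'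
  have hv : πc (fderiv ℂ G x u) = 0 := by
    rw [← ContinuousLinearMap.comp_apply, hcz]; rfl
  have hfp : (fun i => dd u (fun y => G y i) x) = fderiv ℂ G x u := by
    rw [fderiv_pi fun i => ((hGa i) x hx).differentiableAt]
    rfl
  rw [hfp]
  exact (hker _).1 ((hπceq _) ▸ hv)

lemma ddC_comp_mem {V' : Set (Fin n → ℂ)} (hV : IsOpen V') {W : Submodule ℂ (Fin n → ℂ)}
    {F0 : (Fin n → ℂ) → Fin n → ℂ}
    (hFa : ∀ i, AnalyticOnNhd ℂ (fun y => F0 y i) V')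
    (hFW : ∀ y ∈ V', F0 y ∈ W) (L : List (Fin n → ℂ)) :
    (∀ i, AnalyticOnNhd ℂ (fun y => ddC L (fun y' => F0 y' i) y) V') ∧
      (∀ x ∈ V', (fun i => ddC L (fun y' => F0 y' i) x) ∈ W) := by
  induction L with
  | nil => exact ⟨hFa, hFW⟩
  | cons u L ih =>
    refine ⟨fun i => dd_analyticOnNhd (ih.1 i) u, ?_⟩
    exact mem_of_dd hV (fun i => ih.1 i) ih.2 u

lemma conjV_zero : conjV (0 : Fin n → ℂ) = 0 := funext fun _ => map_zero _

lemma conjV_conjV (a : Fin n → ℂ) : conjV (conjV a) = a :=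
  funext fun j => Complex.conj_conj (a j)

lemma conjV_single (i : Fin n) : conjV (Pi.single i (1 : ℂ)) = Pi.single i 1 := by
  funext j
  simp [conjV, Pi.single_apply, apply_ite (starRingEnd ℂ)]

lemma continuous_conjV : Continuous (conjV (n := n)) :=
  continuous_pi fun i => Complex.continuous_conj.comp (continuous_apply i)

lemma norm_conjV (h : Fin n → ℂ) : ‖conjV h‖ = ‖h‖ := by
  rw [Pi.norm_def, Pi.norm_def]
  congr 1
  apply Finset.sup_congr rfl
  intro j _
  show ‖starRingEnd ℂ (h j)‖₊ = ‖h j‖₊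
  rw [starRingEnd_apply, nnnorm_star]

lemma linearIndependent_conjV {m : ℕ} {v : Fin m → Fin n → ℂ}
    (hv : LinearIndependent ℂ v) : LinearIndependent ℂ (fun j => conjV (v j)) := by
  rw [Fintype.linearIndependent_iff] at hv ⊢
  intro c hc j
  have hcv : conjV (∑ j, c j • conjV (v j)) = ∑ j, starRingEnd ℂ (c j) • v j := by
    funext i
    simp [conjV, Finset.sum_apply, map_sum, Pi.smul_apply, smul_eq_mul, map_mul,
      Complex.conj_conj]
  have h0 : ∑ j, starRingEnd ℂ (c j) • v j = 0 := by
    rw [← hcv, hc, conjV_zero]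
  have := hv (fun j => starRingEnd ℂ (c j)) h0 j
  simpa using congrArg (starRingEnd ℂ) this

lemma pd_conj_comp {G : (Fin n → ℂ) → ℂ} {L : (Fin n → ℂ) →L[ℂ] ℂ}
    (hG : HasFDerivAt G L 0) (i : Fin n) :
    pd i (fun z => starRingEnd ℂ (G (conjV z))) 0 = starRingEnd ℂ (L (Pi.single i 1)) := by
  set Ml : (Fin n → ℂ) →ₗ[ℂ] ℂ :=
    { toFun := fun v => starRingEnd ℂ (L (conjV v))
      map_add' := by
        intro a b
        show starRingEnd ℂ (L (conjV (a + b)))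
            = starRingEnd ℂ (L (conjV a)) + starRingEnd ℂ (L (conjV b))
        rw [show conjV (a + b) = conjV a + conjV b from funext fun j => map_add _ _ _,
          map_add, map_add]
      map_smul' := by
        intro c a
        show starRingEnd ℂ (L (conjV (c • a)))
            = (RingHom.id ℂ) c • starRingEnd ℂ (L (conjV a))
        rw [show conjV (c • a) = starRingEnd ℂ c • conjV a from
          funext fun j => map_mul _ _ _, map_smul]
        simp [smul_eq_mul] } with hMl
  set M : (Fin n → ℂ) →L[ℂ] ℂ := LinearMap.toContinuousLinearMap Ml with hM
  have hMeq : ∀ v, M v = starRingEnd ℂ (L (conjV v)) := by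
    intro v; rw [hM, LinearMap.coe_toContinuousLinearMap']; rfl
  have hMd : HasFDerivAt (fun z => starRingEnd ℂ (G (conjV z))) M 0 := by
    rw [hasFDerivAt_iff_isLittleO_nhds_zero]
    have h1 := hasFDerivAt_iff_isLittleO_nhds_zero.1 hG
    have hct : Filter.Tendsto (conjV (n := n)) (𝓝 0) (𝓝 0) := by
      have := continuous_conjV.tendsto (0 : Fin n → ℂ)
      rwa [conjV_zero] at this
    have h2 := h1.comp_tendsto hct
    have h3 : (fun h : Fin n → ℂ => G (0 + conjV h) - G 0 - L (conjV h))
        =o[𝓝 0] (fun h : Fin n → ℂ => h) :=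
      h2.trans_isBigO (Asymptotics.isBigO_of_le _ fun h => le_of_eq (norm_conjV h))
    have h4 : (fun h : Fin n → ℂ =>
          starRingEnd ℂ (G (conjV (0 + h))) - starRingEnd ℂ (G (conjV 0)) - M h)
        =O[𝓝 0] (fun h : Fin n → ℂ => G (0 + conjV h) - G 0 - L (conjV h)) := by
      apply Asymptotics.isBigO_of_le
      intro h
      have he : starRingEnd ℂ (G (conjV (0 + h))) - starRingEnd ℂ (G (conjV 0)) - M h
          = starRingEnd ℂ (G (0 + conjV h) - G 0 - L (conjV h)) := by
        rw [hMeq, zero_add, conjV_zero, map_sub, map_sub, zero_add]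
      rw [he, starRingEnd_apply, norm_star]
    exact h4.trans_isLittleO h3
  have hpd : pd i (fun z => starRingEnd ℂ (G (conjV z))) 0 = M (Pi.single i 1) := by
    show fderiv ℂ (fun z => starRingEnd ℂ (G (conjV z))) 0 (Pi.single i 1) = _
    rw [hMd.fderiv]
  rw [hpd, hMeq, conjV_single]

/-- Key lemma: points with independent gradients, found inside `U` and inside the
analyticity locus of `Q`. -/
lemma key_statement9 {n : ℕ} (Q : (Fin n → ℂ) → (Fin n → ℂ) → ℂ → ℂ)
    (hQ1 : ∀ᶠ p in 𝓝 (0 : (Fin n → ℂ) × (Fin n → ℂ) × ℂ),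
      AnalyticAt ℂ (fun q : (Fin n → ℂ) × (Fin n → ℂ) × ℂ => Q q.1 q.2.1 q.2.2) p)
    (hM : FinNondeg Q) {U : Set (Fin n → ℂ)} (hU : U ∈ 𝓝 0) :
    ∃ b : Fin n → Fin n → ℂ,
      (∀ j, b j ∈ U ∧
        AnalyticAt ℂ (fun q : (Fin n → ℂ) × (Fin n → ℂ) × ℂ => Q q.1 q.2.1 q.2.2)
          (b j, 0, 0)) ∧
      LinearIndependent ℂ
        (fun j => (fun i => pd i (fun χ => Q (b j) χ 0) 0 : Fin n → ℂ)) := by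
  classical
  set Qt : (Fin n → ℂ) × (Fin n → ℂ) × ℂ → ℂ := fun q => Q q.1 q.2.1 q.2.2 with hQt
  have hSopen : IsOpen {p | AnalyticAt ℂ Qt p} := isOpen_analyticAt ℂ Qt
  have hSnhds : {p | AnalyticAt ℂ Qt p} ∈ 𝓝 (0 : (Fin n → ℂ) × (Fin n → ℂ) × ℂ) := hQ1
  set embL : ((Fin n → ℂ) × (Fin n → ℂ)) →L[ℂ] ((Fin n → ℂ) × (Fin n → ℂ) × ℂ) :=
    (ContinuousLinearMap.fst ℂ _ _).prod ((ContinuousLinearMap.snd ℂ _ _).prod 0) with hembL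
  have hembeq : ∀ x : (Fin n → ℂ) × (Fin n → ℂ), embL x = (x.1, x.2, 0) := fun x => rfl
  set H : (Fin n → ℂ) × (Fin n → ℂ) → ℂ := fun x => Q x.1 x.2 0 with hHdef
  set T : Set ((Fin n → ℂ) × (Fin n → ℂ)) := embL ⁻¹' {p | AnalyticAt ℂ Qt p} with hTdef
  have hTopen : IsOpen T := hSopen.preimage embL.continuous
  have hT0 : ((0 : Fin n → ℂ), (0 : Fin n → ℂ)) ∈ T := by
    have h0 : embL ((0 : Fin n → ℂ), (0 : Fin n → ℂ)) = 0 := by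
      rw [hembeq]; rfl
    show embL ((0 : Fin n → ℂ), (0 : Fin n → ℂ)) ∈ {p | AnalyticAt ℂ Qt p}
    rw [h0]
    exact mem_of_mem_nhds hSnhds
  have hH : AnalyticOnNhd ℂ H T := by
    intro x hx
    exact AnalyticAt.comp (hx : AnalyticAt ℂ Qt (embL x)) (embL.analyticAt x)
  set T₁ : Set (Fin n → ℂ) := {b | (b, (0 : Fin n → ℂ)) ∈ T} with hT₁def
  have hT₁open : IsOpen T₁ := hTopen.preimage (continuous_id.prodMk continuous_const)
  have hT₁0 : (0 : Fin n → ℂ) ∈ T₁ := hT0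
  set F : (Fin n → ℂ) → (Fin n → ℂ) :=
    fun b => (fun i => pd i (fun χ => Q b χ 0) 0) with hFdef
  have hFeq : ∀ b ∈ T₁, ∀ i, F b i = dd ((0 : Fin n → ℂ), Pi.single i 1) H (b, 0) := by
    intro b hb i
    show dd (Pi.single i 1) (fun χ => H (b, χ)) 0 = _
    exact dd_snd (hH (b, 0) hb).differentiableAt _
  have hFa : ∀ i, AnalyticOnNhd ℂ (fun b => F b i) T₁ := by
    intro i b hb
    have hinc : AnalyticAt ℂ (fun b' : Fin n → ℂ => (b', (0 : Fin n → ℂ))) b :=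
      analyticAt_id.prod analyticAt_const
    have h1 : AnalyticAt ℂ (fun b' : Fin n → ℂ =>
        dd ((0 : Fin n → ℂ), Pi.single i 1) H (b', 0)) b :=
      (dd_analyticOnNhd hH _ (b, 0) hb).comp
        (f := fun b' : Fin n → ℂ => (b', (0 : Fin n → ℂ))) hinc
    exact h1.congr (Filter.eventuallyEq_of_mem (hT₁open.mem_nhds hb)
      (fun y hy => (hFeq y hy i).symm))
  set V' : Set (Fin n → ℂ) := interior U ∩ T₁ with hV'def
  have hV'open : IsOpen V' := isOpen_interior.inter hT₁open
  have hV'0 : (0 : Fin n → ℂ) ∈ V' := ⟨mem_interior_iff_mem_nhds.2 hU, hT₁0⟩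
  set W : Submodule ℂ (Fin n → ℂ) := Submodule.span ℂ (F '' V') with hWdef
  have hFW : ∀ y ∈ V', F y ∈ W := fun y hy => Submodule.subset_span ⟨y, hy, rfl⟩
  have hFaV : ∀ i, AnalyticOnNhd ℂ (fun y => F y i) V' :=
    fun i => (hFa i).mono Set.inter_subset_right
  have hmem : ∀ L : List (Fin n → ℂ), ∀ x ∈ V',
      (fun i => ddC L (fun y => F y i) x) ∈ W :=
    fun L => (ddC_comp_mem hV'open hFaV hFW L).2
  have hswap : ∀ α : Fin n → ℕ, ∀ i : Fin n,
      pd i (fun χ => mpd α (fun z => Q z χ 0) 0) 0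
        = ddC ((List.finRange n).flatMap fun k => List.replicate (α k) (Pi.single k 1))
            (fun y => F y i) 0 := by
    intro α i
    set Lz : List (Fin n → ℂ) :=
      (List.finRange n).flatMap fun k => List.replicate (α k) (Pi.single k 1) with hLzdef
    set Lz' : List ((Fin n → ℂ) × (Fin n → ℂ)) :=
      Lz.map (fun u => (u, (0 : Fin n → ℂ))) with hLz'def
    have hT₂open : IsOpen {χ : Fin n → ℂ | ((0 : Fin n → ℂ), χ) ∈ T} :=
      hTopen.preimage (continuous_const.prodMk continuous_id)
    have hT₂0 : (0 : Fin n → ℂ) ∈ {χ : Fin n → ℂ | ((0 : Fin n → ℂ), χ) ∈ T} := hT0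
    have hstepA : ∀ χ ∈ {χ : Fin n → ℂ | ((0 : Fin n → ℂ), χ) ∈ T},
        (fun χ => mpd α (fun z => Q z χ 0) 0) χ = (fun χ => ddC Lz' H (0, χ)) χ := by
      intro χ hχ
      show mpd α (fun z => Q z χ 0) 0 = ddC Lz' H (0, χ)
      rw [mpd_eq_ddC]
      exact ddC_fst hTopen hH Lz (0, χ) hχ
    have hstepB : pd i (fun χ => mpd α (fun z => Q z χ 0) 0) 0
        = dd ((0 : Fin n → ℂ), Pi.single i 1) (ddC Lz' H) (0, 0) := by
      have hcongr := dd_congr hT₂open hstepA (Pi.single i 1) 0 hT₂0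
      show dd (Pi.single i 1) (fun χ => mpd α (fun z => Q z χ 0) 0) 0 = _
      rw [hcongr]
      exact dd_snd ((ddC_analyticOnNhd hH Lz' (0, 0) hT0).differentiableAt) _
    have hstepC : dd ((0 : Fin n → ℂ), Pi.single i 1) (ddC Lz' H) (0, 0)
        = ddC Lz' (dd ((0 : Fin n → ℂ), Pi.single i 1) H) (0, 0) :=
      ddC_comm hTopen hH _ Lz' (0, 0) hT0
    have hstepD : ddC Lz (fun y => F y i) 0
        = ddC Lz' (dd ((0 : Fin n → ℂ), Pi.single i 1) H) (0, 0) := by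
      have h1 : ∀ y ∈ T₁, (fun y => F y i) y
          = (fun y => dd ((0 : Fin n → ℂ), Pi.single i 1) H (y, 0)) y :=
        fun y hy => hFeq y hy i
      have h2 := ddC_congr hT₁open h1 Lz 0 hT₁0
      rw [h2]
      exact ddC_fst hTopen (dd_analyticOnNhd hH _) Lz (0, 0) hT0
    rw [hstepB, hstepC, ← hstepD]
  obtain ⟨K, hspan⟩ := hM
  have hsub : {v : Fin n → ℂ | ∃ α : Fin n → ℕ, (∑ i, α i) ≤ K ∧
      v = fun i => pd i (fun χ => mpd α (fun z => Q z χ 0) 0) 0} ⊆ (W : Set (Fin n → ℂ)) := by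
    rintro v ⟨α, -, rfl⟩
    have hm := hmem ((List.finRange n).flatMap fun k =>
      List.replicate (α k) (Pi.single k 1)) 0 hV'0
    have heq : (fun i => pd i (fun χ => mpd α (fun z => Q z χ 0) 0) 0)
        = fun i => ddC ((List.finRange n).flatMap fun k =>
            List.replicate (α k) (Pi.single k 1)) (fun y => F y i) 0 :=
      funext (hswap α)
    rw [heq]
    exact hm
  have hWtop : W = ⊤ := by
    apply top_unique
    rw [← hspan]
    exact Submodule.span_le.2 hsub
  obtain ⟨t, hts, hspan_t, hli⟩ := exists_linearIndependent ℂ (F '' V')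
  have htop : Submodule.span ℂ t = ⊤ := by rw [hspan_t, ← hWdef, hWtop]
  have hfin : t.Finite := hli.set_finite_of_isNoetherian
  haveI : Fintype t := hfin.fintype
  have hbasis : Module.Basis t ℂ (Fin n → ℂ) := Module.Basis.mk hli (by rw [Subtype.range_val]; exact htop.ge)
  have hcard : Fintype.card (Fin n) = Fintype.card t := by
    have h1 := Module.finrank_eq_card_basis hbasis
    rw [Module.finrank_fintype_fun_eq_card] at h1
    exact h1
  set e : Fin n ≃ t := Fintype.equivOfCardEq hcard with hedef
  have himg : ∀ j : Fin n, ((e j : Fin n → ℂ)) ∈ F '' V' := fun j => hts (e j).2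
  choose bfun hbmem hbeq using himg
  refine ⟨bfun, fun j => ⟨interior_subset (hbmem j).1, (hbmem j).2⟩, ?_⟩
  have hFb : (fun j => (fun i => pd i (fun χ => Q (bfun j) χ 0) 0 : Fin n → ℂ))
      = fun j => ((e j : Fin n → ℂ)) := funext fun j => hbeq j
  rw [hFb]
  exact hli.comp (fun j => e j) (fun j₁ j₂ h => e.injective h)

/-- Lemma 2.4: if `M` is finitely nondegenerate at `0`, then in every
neighborhood `U` of `0` one can find `a₁, …, aₙ` with the gradients `∂_z Q̄(aⱼ,0,0)` linearly
independent; equivalently, points `b₁, …, bₙ ∈ U` with the gradients `∂_χ Q(bⱼ,0,0)` linearly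
independent. -/
theorem statement9 (n : ℕ) (hn : 1 ≤ n)
    (Q : (Fin n → ℂ) → (Fin n → ℂ) → ℂ → ℂ)
    (hQ : IsRealNormalDF Q)
    (hM : FinNondeg Q) :
    (∀ U ∈ 𝓝 (0 : Fin n → ℂ), ∃ a : Fin n → Fin n → ℂ, (∀ j, a j ∈ U) ∧
      LinearIndependent ℂ
        (fun j => (fun i => pd i (fun z => QBar Q (a j) z 0) 0 : Fin n → ℂ))) ∧
    (∀ U ∈ 𝓝 (0 : Fin n → ℂ), ∃ b : Fin n → Fin n → ℂ, (∀ j, b j ∈ U) ∧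
      LinearIndependent ℂ
        (fun j => (fun i => pd i (fun χ => Q (b j) χ 0) 0 : Fin n → ℂ))) := by
  obtain ⟨⟨hQ1, -⟩, -⟩ := hQ
  constructor
  · intro U hU
    have hUc : conjV ⁻¹' U ∈ 𝓝 (0 : Fin n → ℂ) := by
      have h := continuous_conjV.continuousAt (x := (0 : Fin n → ℂ))
      have h2 := h.preimage_mem_nhds (by rwa [conjV_zero])
      exact h2
    obtain ⟨b, hb, hli⟩ := key_statement9 Q hQ1 hM hUc
    refine ⟨fun j => conjV (b j), fun j => (hb j).1, ?_⟩
    have hvec : ∀ j, (fun i => pd i (fun z => QBar Q (conjV (b j)) z 0) 0 : Fin n → ℂ)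
        = conjV (fun i => pd i (fun χ => Q (b j) χ 0) 0) := by
      intro j
      funext i
      have hanG : AnalyticAt ℂ (fun χ => Q (b j) χ 0) 0 := by
        have hinc : AnalyticAt ℂ
            (fun χ : Fin n → ℂ => ((b j : Fin n → ℂ), χ, (0 : ℂ))) 0 :=
          analyticAt_const.prod (analyticAt_id.prod analyticAt_const)
        exact ((hb j).2).comp
          (f := fun χ : Fin n → ℂ => ((b j : Fin n → ℂ), χ, (0 : ℂ))) hinc
      have hG := hanG.differentiableAt.hasFDerivAt
      have h1 : (fun z => QBar Q (conjV (b j)) z 0)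
          = fun z => starRingEnd ℂ ((fun χ => Q (b j) χ 0) (conjV z)) := by
        funext z
        show starRingEnd ℂ (Q (conjV (conjV (b j))) (conjV z) (starRingEnd ℂ 0)) = _
        rw [conjV_conjV, map_zero]
      rw [h1, pd_conj_comp hG i]
      rfl
    rw [show (fun j => (fun i => pd i (fun z => QBar Q (conjV (b j)) z 0) 0 : Fin n → ℂ))
        = fun j => conjV (fun i => pd i (fun χ => Q (b j) χ 0) 0) from funext hvec]
    exact linearIndependent_conjV hli
  · intro U hU
    obtain ⟨b, hb, hli⟩ := key_statement9 Q hQ1 hM hU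
    exact ⟨b, fun j => (hb j).1, hli⟩


end HSPMpaper
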